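/- Define V(α, γ) = α·μ + γ·B·φ(Φ^{-1}(1−α)) with constants μ, B > 0. Then for any γ, Δ_r ∈ (0,1) and α, Δ_α > 0 with α + Δ_α < 0.05 and Δ_α ≤ 4α, the prediction-access ratio PAR = (V(α+Δ_α, γ) − V(α, γ)) / (V(α, γ+Δ_r) − V(α, γ)) satisfies (1/4)·(1/α)·(μ/(B·Φ^{-1}(1−α)) + γ)·(Δ_α/Δ_r) ≤ PAR ≤ (1/α)·(μ/(B·Φ^{-1}(1−α)) + γ)·(Δ_α/Δ_r). -/

import Mathlib

open MeasureTheory Set Filter Real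

noncomputable def phi (x : ℝ) : ℝ := (Real.sqrt (2 * Real.pi))⁻¹ * Real.exp (-x ^ 2 / 2)

noncomputable def Phi (t : ℝ) : ℝ := ∫ z in Set.Iic t, phi z

/-- The standard normal quantile function. -/
noncomputable def Phiinv (p : ℝ) : ℝ := sInf {t : ℝ | p ≤ Phi t}

/-- Value function of the linear regression model:
`V(α, γ) = α μ + γ B φ(Φ⁻¹(1-α))`. -/
noncomputable def Vlin (μ B α γ : ℝ) : ℝ := α * μ + γ * B * phi (Phiinv (1 - α))

namespace ParAux

lemma phi_pos (x : ℝ) : 0 < phi x := by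
  have h : 0 < Real.sqrt (2 * Real.pi) := Real.sqrt_pos.2 (by positivity)
  exact mul_pos (inv_pos.2 h) (Real.exp_pos _)

lemma continuous_phi : Continuous phi := by
  unfold phi; fun_prop

lemma integrable_phi : MeasureTheory.Integrable phi := by
  have h : MeasureTheory.Integrable (fun x : ℝ => Real.exp (-(1/2) * x ^ 2)) :=
    integrable_exp_neg_mul_sq (by norm_num)
  have h2 : MeasureTheory.Integrable
      (fun x : ℝ => (Real.sqrt (2 * Real.pi))⁻¹ * Real.exp (-(1/2) * x ^ 2)) := h.const_mul _
  convert h2 using 2 with x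
  unfold phi; ring_nf

lemma integral_phi : ∫ x : ℝ, phi x = 1 := by
  have h := integral_gaussian (1/2 : ℝ)
  have h2 : ∫ x : ℝ, Real.exp (-x ^ 2 / 2) = Real.sqrt (2 * Real.pi) := by
    rw [show Real.sqrt (2*Real.pi) = Real.sqrt (Real.pi / (1/2)) by norm_num [mul_comm], ← h]
    congr 1 with x; ring_nf
  unfold phi
  rw [MeasureTheory.integral_const_mul, h2]
  field_simp

lemma hasDerivAt_neg_phi (t : ℝ) : HasDerivAt (fun s => -phi s) (t * phi t) t := by
  have h1 : HasDerivAt (fun s : ℝ => -s ^ 2 / 2) (-t) t := by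
    have := ((hasDerivAt_pow 2 t).neg).div_const 2
    simpa using this.congr_deriv (by ring)
  have h2 : HasDerivAt (fun s : ℝ => Real.exp (-s ^ 2 / 2)) (Real.exp (-t^2/2) * (-t)) t := h1.exp
  have h3 := (h2.const_mul ((Real.sqrt (2 * Real.pi))⁻¹)).neg
  unfold phi
  exact h3.congr_deriv (by ring)

lemma tendsto_phi : Tendsto phi atTop (nhds 0) := by
  have h1 : Tendsto (fun s : ℝ => -s ^ 2 / 2) atTop atBot := by
    apply Tendsto.atBot_div_const (by norm_num)
    exact tendsto_neg_atBot_iff.2 (tendsto_pow_atTop (by norm_num))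
  have h2 : Tendsto (fun s : ℝ => Real.exp (-s ^ 2 / 2)) atTop (nhds 0) :=
    Real.tendsto_exp_atBot.comp h1
  have h3 := h2.const_mul ((Real.sqrt (2 * Real.pi))⁻¹)
  rw [mul_zero] at h3
  exact h3

noncomputable def Qf (z : ℝ) : ℝ := ∫ t in Set.Ioi z, phi t

lemma Phi_add_Qf (z : ℝ) : Phi z + Qf z = 1 := by
  rw [Phi, Qf, intervalIntegral.integral_Iic_add_Ioi integrable_phi.integrableOn
    integrable_phi.integrableOn, integral_phi]

lemma integral_tphi {z : ℝ} (hz : 0 < z) : ∫ t in Set.Ioi z, t * phi t = phi z := by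
  have h := MeasureTheory.integral_Ioi_of_hasDerivAt_of_nonneg'
    (g := fun s => -phi s) (g' := fun t => t * phi t) (a := z)
    (fun x _ => hasDerivAt_neg_phi x)
    (fun x hx => le_of_lt (mul_pos (lt_trans hz hx) (phi_pos x)))
    (by simpa using tendsto_phi.neg)
  simpa using h

lemma integrableOn_tphi {z : ℝ} (hz : 0 < z) :
    MeasureTheory.IntegrableOn (fun t => t * phi t) (Set.Ioi z) := by
  apply MeasureTheory.integrableOn_Ioi_deriv_of_nonneg' (g := fun s => -phi s)
    (fun x _ => hasDerivAt_neg_phi x)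
    (fun x hx => le_of_lt (mul_pos (lt_trans hz hx) (phi_pos x)))
    (by simpa using tendsto_phi.neg)

lemma mills_upper {z : ℝ} (hz : 0 < z) : z * Qf z ≤ phi z := by
  have hmono : Qf z ≤ ∫ t in Set.Ioi z, (t / z) * phi t := by
    apply MeasureTheory.setIntegral_mono_on integrable_phi.integrableOn
    · exact ((integrableOn_tphi hz).div_const z).congr
        (Filter.Eventually.of_forall (fun t => by ring))
    · exact measurableSet_Ioi
    · intro t ht
      have h1 : (1:ℝ) ≤ t / z := (le_div_iff₀ hz).2 (by simpa using (le_of_lt ht))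
      nlinarith [phi_pos t]
  have h2 : ∫ t in Set.Ioi z, (t / z) * phi t = phi z / z := by
    rw [show (fun t => (t / z) * phi t) = (fun t => (1/z) * (t * phi t)) from
      funext fun t => by ring, MeasureTheory.integral_const_mul, integral_tphi hz]
    ring
  rw [h2] at hmono
  rw [mul_comm]
  exact (le_div_iff₀ hz).1 hmono

lemma hasDerivAt_aux {t : ℝ} (ht : t ≠ 0) :
    HasDerivAt (fun s => -phi s / s) (phi t + phi t / t ^ 2) t := by
  have h := (hasDerivAt_neg_phi t).div (hasDerivAt_id t) ht
  exact h.congr_deriv (by simp only [id]; field_simp; ring)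

lemma tendsto_aux : Tendsto (fun s => -phi s / s) atTop (nhds 0) :=
  tendsto_phi.neg.div_atTop tendsto_id

lemma deriv_aux_nonneg {z t : ℝ} (hz : 0 < z) (ht : t ∈ Set.Ioi z) :
    0 ≤ phi t + phi t / t ^ 2 := by
  have := phi_pos t; have : (0:ℝ) < t := lt_trans hz ht; positivity

lemma integral_aux {z : ℝ} (hz : 0 < z) :
    ∫ t in Set.Ioi z, (phi t + phi t / t ^ 2) = phi z / z := by
  have h := MeasureTheory.integral_Ioi_of_hasDerivAt_of_nonneg'
    (g := fun s => -phi s / s) (g' := fun t => phi t + phi t / t ^ 2) (a := z)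
    (fun x hx => hasDerivAt_aux (ne_of_gt (lt_of_lt_of_le hz hx)))
    (fun x hx => deriv_aux_nonneg hz hx) tendsto_aux
  rw [h]; ring

lemma integrableOn_aux {z : ℝ} (hz : 0 < z) :
    MeasureTheory.IntegrableOn (fun t => phi t + phi t / t ^ 2) (Set.Ioi z) :=
  MeasureTheory.integrableOn_Ioi_deriv_of_nonneg'
    (fun x hx => hasDerivAt_aux (ne_of_gt (lt_of_lt_of_le hz hx)))
    (fun x hx => deriv_aux_nonneg hz hx) tendsto_aux

lemma mills_lower {z : ℝ} (hz : 0 < z) : phi z * (z ^ 2 - 1) ≤ Qf z * z ^ 3 := by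
  have hint2 : MeasureTheory.IntegrableOn (fun t => phi t / t ^ 2) (Set.Ioi z) := by
    have := (integrableOn_aux hz).sub integrable_phi.integrableOn
    exact this.congr (Filter.Eventually.of_forall fun t => by simp [Pi.sub_apply])
  have hsplit : Qf z + ∫ t in Set.Ioi z, phi t / t ^ 2 = phi z / z := by
    rw [Qf, ← MeasureTheory.integral_add integrable_phi.integrableOn hint2, integral_aux hz]
  have hb : ∫ t in Set.Ioi z, phi t / t ^ 2 ≤ phi z / z ^ 3 := by
    have hmono : ∫ t in Set.Ioi z, phi t / t ^ 2 ≤ ∫ t in Set.Ioi z, (t * phi t) / z ^ 3 := by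
      apply MeasureTheory.setIntegral_mono_on hint2
        ((integrableOn_tphi hz).div_const _) measurableSet_Ioi
      intro t ht
      have htz : z < t := ht
      have hp := phi_pos t
      have h0t : (0:ℝ) < t := lt_trans hz htz
      rw [div_le_div_iff₀ (by positivity) (by positivity)]
      nlinarith [pow_le_pow_left₀ hz.le htz.le 3, phi_pos t, pow_pos h0t 2]
    rw [MeasureTheory.integral_div, integral_tphi hz] at hmono
    exact hmono
  have h3 : phi z / z - phi z / z ^ 3 ≤ Qf z := by linarith
  have hz3 : (0:ℝ) < z ^ 3 := by positivity
  have h4 : (phi z / z - phi z / z ^ 3) * z ^ 3 ≤ Qf z * z ^ 3 :=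
    mul_le_mul_of_nonneg_right h3 hz3.le
  have h5 : (phi z / z - phi z / z ^ 3) * z ^ 3 = phi z * (z ^ 2 - 1) := by
    field_simp
  linarith

lemma Phi_sub_Phi {a b : ℝ} : Phi b - Phi a = ∫ t in a..b, phi t := by
  exact intervalIntegral.integral_Iic_sub_Iic integrable_phi.integrableOn
    integrable_phi.integrableOn

lemma strictMono_Phi : StrictMono Phi := by
  intro a b hab
  have h : 0 < ∫ t in a..b, phi t :=
    intervalIntegral.intervalIntegral_pos_of_pos
      (integrable_phi.intervalIntegrable) (fun x => phi_pos x) hab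
  have := Phi_sub_Phi (a := a) (b := b)
  linarith

lemma continuous_Phi : Continuous Phi := by
  have h : Continuous fun b => ∫ t in (0:ℝ)..b, phi t :=
    integrable_phi.continuous_primitive 0
  have : Phi = fun b => Phi 0 + ∫ t in (0:ℝ)..b, phi t := by
    funext b
    have := Phi_sub_Phi (a := (0:ℝ)) (b := b)
    linarith
  rw [this]
  exact continuous_const.add h

lemma Qf_anti : StrictAnti Qf := by
  intro a b hab
  have ha := Phi_add_Qf a; have hb := Phi_add_Qf b
  have := strictMono_Phi hab
  linarith

lemma phi_le_half (x : ℝ) : phi x ≤ 1 / 2 := by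
  unfold phi
  have h2 : (2:ℝ) ≤ Real.sqrt (2 * Real.pi) := by
    have : ((2:ℝ))^2 ≤ 2 * Real.pi := by nlinarith [Real.pi_gt_three]
    nlinarith [Real.sq_sqrt (by positivity : (0:ℝ) ≤ 2 * Real.pi),
      Real.sqrt_nonneg (2 * Real.pi)]
  have h3 : Real.exp (-x ^ 2 / 2) ≤ 1 := by
    rw [Real.exp_le_one_iff]
    nlinarith [sq_nonneg x]
  have h4 : (0:ℝ) < Real.sqrt (2 * Real.pi) := by linarith
  calc (Real.sqrt (2 * Real.pi))⁻¹ * Real.exp (-x ^ 2 / 2)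
      ≤ (Real.sqrt (2 * Real.pi))⁻¹ * 1 := mul_le_mul_of_nonneg_left h3 (by positivity)
    _ ≤ 1/2 := by
        rw [mul_one, inv_le_comm₀ (by linarith) (by norm_num)]
        linarith [show ((1:ℝ)/2)⁻¹ = 2 by norm_num]

lemma Qf_small {b : ℝ} (hb : 1 ≤ b) : Qf b ≤ 1 / b := by
  have hq : Qf b ≤ phi b / b := by
    rw [le_div_iff₀ (by linarith)]
    linarith [mills_upper (lt_of_lt_of_le zero_lt_one hb)]
  have hbp : (0:ℝ) < b := by linarith
  calc Qf b ≤ phi b / b := hq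
    _ ≤ 1 / b := by gcongr; linarith [phi_le_half b]

lemma exists_Phi_eq {p : ℝ} (hp1 : Phi 0 ≤ p) (hp2 : p < 1) : ∃ t, 0 ≤ t ∧ Phi t = p := by
  set b : ℝ := max 1 (2 / (1 - p)) with hb
  have hb1 : 1 ≤ b := le_max_left _ _
  have hb2 : 2 / (1 - p) ≤ b := le_max_right _ _
  have hQb : Qf b ≤ (1 - p) / 2 := by
    have h := Qf_small hb1
    have h1p : 0 < 1 - p := by linarith
    have hbp : (0:ℝ) < b := by linarith
    have h2b : 2 ≤ b * (1 - p) := (div_le_iff₀ h1p).1 hb2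
    have : 1 / b ≤ (1-p)/2 := by
      rw [div_le_div_iff₀ hbp (by norm_num)]
      nlinarith
    linarith
  have hPb : p ≤ Phi b := by
    have := Phi_add_Qf b
    nlinarith
  obtain ⟨t, ht, hPt⟩ := intermediate_value_Icc (le_trans zero_le_one hb1)
    (continuous_Phi.continuousOn) ⟨hp1, hPb⟩
  exact ⟨t, ht.1, hPt⟩

lemma Phiinv_eq {p t₀ : ℝ} (h : Phi t₀ = p) : Phiinv p = t₀ := by
  have hset : {t : ℝ | p ≤ Phi t} = Set.Ici t₀ := by
    ext t
    simp only [Set.mem_setOf_eq, Set.mem_Ici, ← h]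
    exact ⟨fun hh => strictMono_Phi.le_iff_le.1 hh, fun hh => strictMono_Phi.le_iff_le.2 hh⟩
  rw [Phiinv, hset, csInf_Ici]

lemma phi_num : 343 / 2400 ≤ phi (7/5) := by
  have hsq : Real.sqrt (2 * Real.pi) ≤ 2.5066285 := by
    have hpi : 2 * Real.pi ≤ 6.283186 := by nlinarith [Real.pi_lt_d6]
    have : Real.sqrt (2 * Real.pi) ≤ Real.sqrt 6.283186 := Real.sqrt_le_sqrt hpi
    have h2 : Real.sqrt 6.283186 ≤ 2.5066285 := by
      have : Real.sqrt 6.283186 ≤ Real.sqrt (2.5066285^2) :=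
        Real.sqrt_le_sqrt (by norm_num)
      rwa [Real.sqrt_sq (by norm_num)] at this
    linarith
  have hexp : Real.exp ((7/5:ℝ)^2 / 2) ≤ 2.664983 := by
    have h1 : ((7/5:ℝ)^2/2) = 1 - 1/50 := by norm_num
    rw [h1, Real.exp_sub]
    have he1 : Real.exp 1 < 2.7182818286 := Real.exp_one_lt_d9
    have he2 : (1.02:ℝ) ≤ Real.exp (1/50) := by
      have := Real.add_one_le_exp (1/50:ℝ)
      linarith
    have hpos : (0:ℝ) < Real.exp (1/50) := Real.exp_pos _
    rw [div_le_iff₀ hpos]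
    nlinarith
  unfold phi
  have h1 : Real.exp (-(7/5:ℝ)^2 / 2) = (Real.exp ((7/5:ℝ)^2/2))⁻¹ := by
    rw [← Real.exp_neg]; ring_nf
  rw [h1]
  have hs : (0:ℝ) < Real.sqrt (2 * Real.pi) := by
    have := Real.sqrt_le_sqrt (le_of_lt Real.two_pi_pos)
    positivity
  have hepos : (0:ℝ) < Real.exp ((7/5:ℝ)^2/2) := Real.exp_pos _
  rw [← mul_inv, ← one_div]
  rw [div_le_div_iff₀ (by norm_num) (by positivity)]
  calc (343:ℝ) * (Real.sqrt (2*Real.pi) * Real.exp ((7/5:ℝ)^2/2))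
      ≤ 343 * (2.5066285 * 2.664983) := by
        apply mul_le_mul_of_nonneg_left _ (by norm_num)
        have := Real.exp_pos ((7/5:ℝ)^2/2)
        nlinarith
    _ ≤ 1 * 2400 := by norm_num

lemma Qf_num : 1/20 ≤ Qf (7/5) := by
  have h := mills_lower (show (0:ℝ) < 7/5 by norm_num)
  have hp := phi_num
  nlinarith [phi_pos (7/5 : ℝ)]

lemma interval_lower {z' z : ℝ} (h0 : 0 < z') (hzz : z' ≤ z) :
    z' * (Qf z' - Qf z) ≤ phi z' - phi z ∧ phi z' - phi z ≤ z * (Qf z' - Qf z) := by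
  have hQ : Qf z' - Qf z = ∫ t in z'..z, phi t := by
    have h1 := Phi_add_Qf z'; have h2 := Phi_add_Qf z
    have h3 := Phi_sub_Phi (a := z') (b := z)
    linarith
  have hphi : phi z' - phi z = ∫ t in z'..z, t * phi t := by
    have := intervalIntegral.integral_eq_sub_of_hasDerivAt
      (f := fun s => -phi s) (f' := fun t => t * phi t) (a := z') (b := z)
      (fun x _ => hasDerivAt_neg_phi x)
      ((continuous_id.mul continuous_phi).intervalIntegrable _ _)
    rw [this]; ring
  have hmono1 : ∫ t in z'..z, z' * phi t ≤ ∫ t in z'..z, t * phi t := by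
    apply intervalIntegral.integral_mono_on hzz
      ((continuous_const.mul continuous_phi).intervalIntegrable _ _)
      ((continuous_id.mul continuous_phi).intervalIntegrable _ _)
    intro t ht
    exact mul_le_mul_of_nonneg_right ht.1 (phi_pos t).le
  have hmono2 : ∫ t in z'..z, t * phi t ≤ ∫ t in z'..z, z * phi t := by
    apply intervalIntegral.integral_mono_on hzz
      ((continuous_id.mul continuous_phi).intervalIntegrable _ _)
      ((continuous_const.mul continuous_phi).intervalIntegrable _ _)
    intro t ht
    exact mul_le_mul_of_nonneg_right ht.2 (phi_pos t).le
  rw [intervalIntegral.integral_const_mul] at hmono1 hmono2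
  constructor
  · rw [hphi, hQ]; exact hmono1
  · rw [hphi, hQ]; exact hmono2

lemma phi_ratio {z' z : ℝ} : phi z' = phi z * Real.exp ((z^2 - z'^2)/2) := by
  unfold phi
  rw [mul_assoc, ← Real.exp_add]
  ring_nf

set_option maxHeartbeats 1000000 in
lemma crux {z z' : ℝ} (hz' : 7/5 ≤ z') (hzz : z' ≤ z)
    (hmu : z * Qf z ≤ phi z) (hml' : phi z' * (z'^2 - 1) ≤ Qf z' * z'^3)
    (hQ5 : Qf z' ≤ 5 * Qf z) : z^3 ≤ 4 * z' * (z^2 - 1) := by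
  have hz0 : (0:ℝ) < z := by linarith
  have hz'0 : (0:ℝ) < z' := by linarith
  have hp := phi_pos z
  have hp' := phi_pos z'
  set E := Real.exp ((z^2 - z'^2)/2) with hE
  have hEpos : 0 < E := Real.exp_pos _
  have hpr : phi z' = phi z * E := phi_ratio
  have hkey : z * (phi z * E) * (z'^2 - 1) ≤ 5 * phi z * z'^3 := by
    have h1 : z * (phi z' * (z'^2-1)) ≤ z * (Qf z' * z'^3) :=
      mul_le_mul_of_nonneg_left hml' hz0.le
    have h2 : z * (Qf z' * z'^3) ≤ z * ((5 * Qf z) * z'^3) := by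
      apply mul_le_mul_of_nonneg_left _ hz0.le
      apply mul_le_mul_of_nonneg_right hQ5 (by positivity)
    have h4 : 5 * (z * Qf z) * z'^3 ≤ 5 * phi z * z'^3 := by
      apply mul_le_mul_of_nonneg_right _ (by positivity)
      linarith
    rw [hpr] at h1
    nlinarith [h1, h2, h4]
  by_contra hc
  push_neg at hc
  rcases le_or_gt z (27/5) with hcase | hcase
  · nlinarith [sq_nonneg (z - 7/5), sq_nonneg (z - 27/5),
      mul_nonneg (sub_nonneg.2 hcase) (sub_nonneg.2 (le_trans hz' hzz)), mul_pos hz'0 hz0]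
  · have hz2 : (729:ℝ)/25 ≤ z^2 := by nlinarith
    have hz21 : (704/729) * z^2 ≤ z^2 - 1 := by nlinarith
    have hz'small : z' < (729/2816) * z := by
      have h1 : 4 * z' * ((704/729) * z^2) ≤ 4 * z' * (z^2 - 1) := by
        apply mul_le_mul_of_nonneg_left hz21 (by positivity)
      have h2 : 4 * z' * ((704/729) * z^2) < z^3 := lt_of_le_of_lt h1 hc
      nlinarith [sq_nonneg z]
    have hdiff : 27 ≤ z^2 - z'^2 := by nlinarith
    have hE14 : (14:ℝ) ≤ E := by
      have := Real.add_one_le_exp ((z^2 - z'^2)/2)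
      rw [← hE] at this
      linarith
    have hz'sq : (0:ℝ) < z'^2 - 1 := by nlinarith
    have hkey2 : z' * E * (z'^2 - 1) ≤ 5 * z'^3 := by
      have h5 : z' * (phi z * E) * (z'^2-1) ≤ z * (phi z * E) * (z'^2-1) := by
        apply mul_le_mul_of_nonneg_right _ hz'sq.le
        apply mul_le_mul_of_nonneg_right hzz (by positivity)
      have h6 : z' * (phi z * E) * (z'^2-1) ≤ 5 * phi z * z'^3 := le_trans h5 hkey
      have h7 : phi z * (z' * E * (z'^2-1)) ≤ phi z * (5 * z'^3) := by linear_combination h6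
      exact le_of_mul_le_mul_left h7 hp
    have h8 : 14 * (z' * (z'^2-1)) ≤ E * (z' * (z'^2-1)) :=
      mul_le_mul_of_nonneg_right hE14 (by positivity)
    have h9 : 14 * (z' * (z'^2-1)) ≤ 5 * z'^3 := by nlinarith [h8, hkey2]
    have hq : (49/25:ℝ) ≤ z'^2 := by nlinarith
    have h10 : 9 * z'^3 ≤ 14 * z' := by nlinarith [h9]
    have h11 : 9 * ((49/25) * z') ≤ 9 * z'^3 := by nlinarith [hq, hz'0]
    linarith

end ParAux

open ParAux

set_option maxHeartbeats 2000000 in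
/-- Prediction-access ratio bounds for the linear regression model. -/
theorem par_linear (μ B γ Δr α Δα : ℝ) (hμ : 0 < μ) (hB : 0 < B)
    (hγ : γ ∈ Set.Ioo (0 : ℝ) 1) (hΔr : Δr ∈ Set.Ioo (0 : ℝ) 1)
    (hα : 0 < α) (hΔα : 0 < Δα) (hsum : α + Δα < 0.05) (hΔα4 : Δα ≤ 4 * α) :
    (1 / 4) * (1 / α) * (μ / (B * Phiinv (1 - α)) + γ) * (Δα / Δr) ≤
        (Vlin μ B (α + Δα) γ - Vlin μ B α γ) / (Vlin μ B α (γ + Δr) - Vlin μ B α γ) ∧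
      (Vlin μ B (α + Δα) γ - Vlin μ B α γ) / (Vlin μ B α (γ + Δr) - Vlin μ B α γ) ≤
        (1 / α) * (μ / (B * Phiinv (1 - α)) + γ) * (Δα / Δr) := by
  obtain ⟨hγ0, -⟩ := hγ
  obtain ⟨hΔr0, -⟩ := hΔr
  have hsum' : α + Δα < 1/20 := by norm_num at hsum; linarith
  have hQf14 : (1:ℝ)/20 ≤ Qf (7/5) := Qf_num
  have hPhi0 : Phi 0 ≤ 19/20 := by
    have h0 := Phi_add_Qf 0
    have := Qf_anti (show (0:ℝ) < 7/5 by norm_num)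
    linarith
  -- z = Phiinv (1 - α)
  obtain ⟨z, hz0le, hzPhi⟩ := exists_Phi_eq (p := 1 - α) (by linarith) (by linarith)
  have hzinv : Phiinv (1 - α) = z := Phiinv_eq hzPhi
  have hQz : Qf z = α := by have := Phi_add_Qf z; linarith
  -- z' = Phiinv (1 - (α + Δα))
  obtain ⟨z', hz'0le, hz'Phi⟩ := exists_Phi_eq (p := 1 - (α + Δα)) (by linarith) (by linarith)
  have hz'inv : Phiinv (1 - (α + Δα)) = z' := Phiinv_eq hz'Phi
  have hQz' : Qf z' = α + Δα := by have := Phi_add_Qf z'; linarith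
  have hz'14 : 7/5 ≤ z' := by
    by_contra h
    push_neg at h
    have := Qf_anti h
    rw [hQz'] at this
    linarith
  have hz'z : z' ≤ z := by
    by_contra h
    push_neg at h
    have := Qf_anti h
    rw [hQz, hQz'] at this
    linarith
  have hz14 : 7/5 ≤ z := le_trans hz'14 hz'z
  have hz0 : (0:ℝ) < z := by linarith
  have hz'0 : (0:ℝ) < z' := by linarith
  -- analytic facts
  have hmu0 := mills_upper hz0
  have hml0 := mills_lower hz0
  have hml'0 := mills_lower hz'0
  have hQ5 : Qf z' ≤ 5 * Qf z := by rw [hQz, hQz']; linarith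
  have hcrux : z^3 ≤ 4 * z' * (z^2 - 1) := crux hz'14 hz'z hmu0 hml'0 hQ5
  have hmu : z * α ≤ phi z := by rw [hQz] at hmu0; exact hmu0
  have hml : phi z * (z^2 - 1) ≤ α * z^3 := by
    rw [hQz] at hml0
    linarith [hml0]
  obtain ⟨hil, hiu⟩ := interval_lower hz'0 hz'z
  rw [hQz, hQz'] at hil hiu
  have hil' : z' * Δα ≤ phi z' - phi z := by
    have : α + Δα - α = Δα := by ring
    rw [this] at hil; exact hil
  have hiu' : phi z' - phi z ≤ z * Δα := by
    have : α + Δα - α = Δα := by ring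
    rw [this] at hiu; exact hiu
  -- rewrite the goal
  have hNum : Vlin μ B (α + Δα) γ - Vlin μ B α γ = Δα * μ + γ * B * (phi z' - phi z) := by
    rw [Vlin, Vlin, hzinv, hz'inv]; ring
  have hDen : Vlin μ B α (γ + Δr) - Vlin μ B α γ = Δr * (B * phi z) := by
    rw [Vlin, Vlin, hzinv]; ring
  rw [hNum, hDen, hzinv]
  have hppos : 0 < phi z := phi_pos z
  have hp'pos : 0 < phi z' := phi_pos z'
  set p := phi z with hpdef
  set p' := phi z' with hp'def
  have hD : 0 < Δr * (B * p) := by positivity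
  have hzsq : (49/25:ℝ) ≤ z^2 := by
    nlinarith [mul_le_mul hz14 hz14 (by norm_num : (0:ℝ) ≤ 7/5) hz0.le]
  have hz21 : (0:ℝ) < z^2 - 1 := by linarith
  -- key scalar inequalities
  have key_up : α * z * (Δα * μ + γ * B * (p' - p)) ≤ Δα * (μ + γ * B * z) * p := by
    have t1 : (Δα * μ) * (z * α) ≤ (Δα * μ) * p :=
      mul_le_mul_of_nonneg_left hmu (by positivity)
    have t2 : (α * z * γ * B) * (p' - p) ≤ (α * z * γ * B) * (z * Δα) := by
      apply mul_le_mul_of_nonneg_left hiu' (by positivity)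
    have t3 : (Δα * γ * B * z) * (z * α) ≤ (Δα * γ * B * z) * p :=
      mul_le_mul_of_nonneg_left hmu (by positivity)
    linarith [t1, t2, t3]
  have key_lo : Δα * (μ + γ * B * z) * p ≤ 4 * (α * z) * (Δα * μ + γ * B * (p' - p)) := by
    have hp4 : p ≤ 4 * (α * z) := by
      have hz43 : (0:ℝ) ≤ 3 * z^2 - 4 := by linarith
      have h1 : α * z^3 ≤ 4 * (α * z) * (z^2 - 1) := by
        nlinarith [mul_nonneg (mul_nonneg hα.le hz0.le) hz43]
      have h2 : p * (z^2 - 1) ≤ (4 * (α * z)) * (z^2 - 1) := by linarith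
      exact le_of_mul_le_mul_right h2 hz21
    have hp4' : p ≤ 4 * (α * z') := by
      have h1 : α * z^3 ≤ α * (4 * z' * (z^2 - 1)) :=
        mul_le_mul_of_nonneg_left hcrux hα.le
      have h2 : p * (z^2 - 1) ≤ (4 * (α * z')) * (z^2 - 1) := by
        have : α * (4 * z' * (z^2 - 1)) = (4 * (α * z')) * (z^2 - 1) := by ring
        linarith [hml, h1]
      exact le_of_mul_le_mul_right h2 hz21
    have t1 : (Δα * μ) * p ≤ (Δα * μ) * (4 * (α * z)) :=
      mul_le_mul_of_nonneg_left hp4 (by positivity)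
    have t2 : (Δα * γ * B * z) * p ≤ (Δα * γ * B * z) * (4 * (α * z')) :=
      mul_le_mul_of_nonneg_left hp4' (by positivity)
    have t3 : (4 * α * γ * B * z) * (z' * Δα) ≤ (4 * α * γ * B * z) * (p' - p) :=
      mul_le_mul_of_nonneg_left hil' (by positivity)
    linarith [t1, t2, t3]
  have hαz : (0:ℝ) < α * z := by positivity
  constructor
  · rw [← sub_nonneg]
    have expand : (Δα * μ + γ * B * (p' - p)) / (Δr * (B * p)) -
        1 / 4 * (1 / α) * (μ / (B * z) + γ) * (Δα / Δr) =
        (4 * (α * z) * (Δα * μ + γ * B * (p' - p)) - Δα * (μ + γ * B * z) * p) /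
          (4 * (α * z) * (Δr * (B * p))) := by
      field_simp
    rw [expand]
    apply div_nonneg (by linarith) (by positivity)
  · rw [← sub_nonneg]
    have expand : 1 / α * (μ / (B * z) + γ) * (Δα / Δr) -
        (Δα * μ + γ * B * (p' - p)) / (Δr * (B * p)) =
        (Δα * (μ + γ * B * z) * p - α * z * (Δα * μ + γ * B * (p' - p))) /
          ((α * z) * (Δr * (B * p))) := by
      field_simp
    rw [expand]
    apply div_nonneg (by linarith) (by positivity)
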